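/- A submanifold M of the gradient shrinking Ricci soliton R^p × S^k_{√(2(k-1))} (with f(x,y) = |x|²/4) is a self-shrinker if and only if the cartesian coordinates x₁,…,x_p of R^p restricted to M satisfy Δ_f x_i = −(1/2)x_i, and the cartesian coordinates y₁,…,y_{k+1} of R^{k+1} restricted to M satisfy Δ_f y_i = −( (1/(2(k−1))) tr_M g_{S^k} ) y_i, where tr_M g_{S^k} is the trace over the tangent space of M of the pullback of the metric of the spherical factor. -/

import Mathlib

/-!
Common differential-geometric definitions, built from scratch on top of Mathlib.

A submanifold is modelled as a smooth manifold `M` (charted over `EuclideanSpace ℝ (Fin m)`)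
together with a smooth immersion `F : M → EuclideanSpace ℝ (Fin N)`.  All first and second
order geometric quantities (induced metric, second fundamental form, mean curvature vector,
Laplace-Beltrami operator, drifted Laplacian, Ricci/scalar curvature via the Gauss equation,
etc.) are defined in the local parametrization `F ∘ (extChartAt (𝓡 m) p).symm` at the point
`chpt m p = extChartAt (𝓡 m) p p`.
-/

noncomputable section

open scoped RealInnerProductSpace Manifold ENNReal NNReal
open MeasureTheory Filter

abbrev Euc (N : ℕ) : Type := EuclideanSpace ℝ (Fin N)

namespace ShrinkerPaper

variable {m N : ℕ}

/-- `i`-th standard basis vector of `ℝ^m`. -/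
def ebasis (m : ℕ) (i : Fin m) : Euc m := EuclideanSpace.single i (1 : ℝ)

/-- First partial derivative of a parametrization. -/
def pder (φ : Euc m → Euc N) (i : Fin m) (x : Euc m) : Euc N :=
  fderiv ℝ φ x (ebasis m i)

/-- Second partial derivative of a parametrization. -/
def pder2 (φ : Euc m → Euc N) (i j : Fin m) (x : Euc m) : Euc N :=
  fderiv ℝ (fun y => pder φ i y) x (ebasis m j)

/-- First partial derivative of a scalar function. -/
def spder (w : Euc m → ℝ) (i : Fin m) (x : Euc m) : ℝ :=
  fderiv ℝ w x (ebasis m i)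

/-- Second partial derivative of a scalar function. -/
def spder2 (w : Euc m → ℝ) (i j : Fin m) (x : Euc m) : ℝ :=
  fderiv ℝ (fun y => spder w i y) x (ebasis m j)

/-- Induced metric (first fundamental form) in a parametrization. -/
def gram (φ : Euc m → Euc N) (x : Euc m) : Matrix (Fin m) (Fin m) ℝ :=
  Matrix.of fun i j => ⟪pder φ i x, pder φ j x⟫

/-- Inverse induced metric. -/
def ginv (φ : Euc m → Euc N) (x : Euc m) : Matrix (Fin m) (Fin m) ℝ :=
  (gram φ x)⁻¹

/-- Tangent space of the immersed submanifold, as a subspace of the ambient Euclidean space. -/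
def tanSpace (φ : Euc m → Euc N) (x : Euc m) : Submodule ℝ (Euc N) :=
  LinearMap.range (fderiv ℝ φ x : Euc m →ₗ[ℝ] Euc N)

/-- Orthogonal projection onto the tangent space. -/
def tproj (φ : Euc m → Euc N) (x : Euc m) (v : Euc N) : Euc N :=
  (Submodule.orthogonalProjection (tanSpace φ x) v : Euc N)

/-- Orthogonal projection onto the normal space (`v ↦ v^⊥`). -/
def nproj (φ : Euc m → Euc N) (x : Euc m) (v : Euc N) : Euc N :=
  v - tproj φ x v

/-- Vector-valued second fundamental form in a parametrization. -/
def sff (φ : Euc m → Euc N) (x : Euc m) (i j : Fin m) : Euc N :=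
  nproj φ x (pder2 φ i j x)

/-- Mean curvature vector `H⃗ = ∑ g^{ij} (∂_i∂_j φ)^⊥` in a parametrization. -/
def meanCurvCoord (φ : Euc m → Euc N) (x : Euc m) : Euc N :=
  ∑ i, ∑ j, ginv φ x i j • sff φ x i j

/-- Christoffel symbols `Γ^l_{ij}` of the induced metric. -/
def christoffel (φ : Euc m → Euc N) (x : Euc m) (l i j : Fin m) : ℝ :=
  ∑ r, ginv φ x l r * ⟪pder2 φ i j x, pder φ r x⟫

/-- Laplace-Beltrami operator of the induced metric, in a parametrization:
`Δ w = g^{ij} (∂_i∂_j w - Γ^l_{ij} ∂_l w)`. -/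
def lapCoord (φ : Euc m → Euc N) (w : Euc m → ℝ) (x : Euc m) : ℝ :=
  ∑ i, ∑ j, ginv φ x i j *
    (spder2 w i j x - ∑ l, christoffel φ x l i j * spder w l x)

/-- Inner product of intrinsic gradients: `⟨∇w₁, ∇w₂⟩ = g^{ij} ∂_i w₁ ∂_j w₂`. -/
def gradInnerCoord (φ : Euc m → Euc N) (w₁ w₂ : Euc m → ℝ) (x : Euc m) : ℝ :=
  ∑ i, ∑ j, ginv φ x i j * spder w₁ i x * spder w₂ j x

/-- Hessian `∇∇w` of the induced metric, in a parametrization. -/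
def hessCoord (φ : Euc m → Euc N) (w : Euc m → ℝ) (x : Euc m) (i j : Fin m) : ℝ :=
  spder2 w i j x - ∑ l, christoffel φ x l i j * spder w l x

/-- Ricci curvature of the induced metric (via the Gauss equation, valid for
isometrically immersed submanifolds of Euclidean space). -/
def ricCoord (φ : Euc m → Euc N) (x : Euc m) (i j : Fin m) : ℝ :=
  ∑ a, ∑ b, ginv φ x a b *
    (⟪sff φ x a b, sff φ x i j⟫ - ⟪sff φ x a i, sff φ x b j⟫)

/-- Scalar curvature of the induced metric. -/
def scalCoord (φ : Euc m → Euc N) (x : Euc m) : ℝ :=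
  ∑ i, ∑ j, ginv φ x i j * ricCoord φ x i j

/-- Coordinates (w.r.t. the frame `∂_i φ`) of an ambient vector tangent to the submanifold. -/
def coordsOf (φ : Euc m → Euc N) (x : Euc m) (u : Euc N) (i : Fin m) : ℝ :=
  ∑ j, ginv φ x i j * ⟪u, pder φ j x⟫

/-! ### Manifold-level definitions -/

/-- The canonical local parametrization of the immersion `F` around `p`. -/
def chmap (m : ℕ) {N : ℕ} {M : Type*} [TopologicalSpace M] [ChartedSpace (Euc m) M]
    (F : M → Euc N) (p : M) : Euc m → Euc N :=
  F ∘ (extChartAt (𝓡 m) p).symm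

/-- The coordinate representation of the point `p`. -/
def chpt (m : ℕ) {M : Type*} [TopologicalSpace M] [ChartedSpace (Euc m) M] (p : M) : Euc m :=
  extChartAt (𝓡 m) p p

/-- Local coordinate representation of a scalar function on `M` around `p`. -/
def pull (m : ℕ) {M : Type*} [TopologicalSpace M] [ChartedSpace (Euc m) M]
    (u : M → ℝ) (p : M) : Euc m → ℝ :=
  u ∘ (extChartAt (𝓡 m) p).symm

/-- Mean curvature vector of the immersion `F` at `p`. -/
def mcv (m : ℕ) {N : ℕ} {M : Type*} [TopologicalSpace M] [ChartedSpace (Euc m) M]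
    (F : M → Euc N) (p : M) : Euc N :=
  meanCurvCoord (chmap m F p) (chpt m p)

/-- Tangent space of the immersion `F` at `p`, as a subspace of the ambient space. -/
def tangentAt (m : ℕ) {N : ℕ} {M : Type*} [TopologicalSpace M] [ChartedSpace (Euc m) M]
    (F : M → Euc N) (p : M) : Submodule ℝ (Euc N) :=
  tanSpace (chmap m F p) (chpt m p)

/-- Projection of an ambient vector onto the normal space of `F` at `p`. -/
def nprojAt (m : ℕ) {N : ℕ} {M : Type*} [TopologicalSpace M] [ChartedSpace (Euc m) M]
    (F : M → Euc N) (p : M) (v : Euc N) : Euc N :=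
  nproj (chmap m F p) (chpt m p) v

/-- Laplace-Beltrami operator (of the metric induced by `F`) applied to `u : M → ℝ`. -/
def lapM (m : ℕ) {N : ℕ} {M : Type*} [TopologicalSpace M] [ChartedSpace (Euc m) M]
    (F : M → Euc N) (u : M → ℝ) (p : M) : ℝ :=
  lapCoord (chmap m F p) (pull m u p) (chpt m p)

/-- Squared norm of the intrinsic gradient `|∇u|²` of `u : M → ℝ`. -/
def gradSq (m : ℕ) {N : ℕ} {M : Type*} [TopologicalSpace M] [ChartedSpace (Euc m) M]
    (F : M → Euc N) (u : M → ℝ) (p : M) : ℝ :=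
  gradInnerCoord (chmap m F p) (pull m u p) (pull m u p) (chpt m p)

/-- Inner product of intrinsic gradients of two functions on `M`. -/
def gradInnerM (m : ℕ) {N : ℕ} {M : Type*} [TopologicalSpace M] [ChartedSpace (Euc m) M]
    (F : M → Euc N) (u v : M → ℝ) (p : M) : ℝ :=
  gradInnerCoord (chmap m F p) (pull m u p) (pull m v p) (chpt m p)

/-- Drifted Laplacian `Δ_f u = Δ u - ⟨∇f, ∇u⟩` on `M`. -/
def driftLap (m : ℕ) {N : ℕ} {M : Type*} [TopologicalSpace M] [ChartedSpace (Euc m) M]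
    (F : M → Euc N) (fM u : M → ℝ) (p : M) : ℝ :=
  lapM m F u p - gradInnerM m F fM u p

/-- `F : M → ℝ^N` is a smooth immersion. -/
def IsSmoothImmersion (m : ℕ) {N : ℕ} {M : Type*} [TopologicalSpace M]
    [ChartedSpace (Euc m) M] (F : M → Euc N) : Prop :=
  ContMDiff (𝓡 m) 𝓘(ℝ, Euc N) (⊤ : ℕ∞) F ∧
    ∀ p : M, Function.Injective (mfderiv (𝓡 m) 𝓘(ℝ, Euc N) F p)

/-- The self-shrinker equation `H⃗ + (1/2) x^⊥ = 0` at `p`. -/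
def EucShrinkEqnAt (m : ℕ) {N : ℕ} {M : Type*} [TopologicalSpace M]
    [ChartedSpace (Euc m) M] (F : M → Euc N) (p : M) : Prop :=
  mcv m F p + (2⁻¹ : ℝ) • nprojAt m F p (F p) = 0

/-- A self-shrinker immersed in Euclidean space: `H⃗ + (1/2) x^⊥ = 0`. -/
def IsEucSelfShrinker (m : ℕ) {N : ℕ} {M : Type*} [TopologicalSpace M]
    [ChartedSpace (Euc m) M] (F : M → Euc N) : Prop :=
  IsSmoothImmersion m F ∧ ∀ p : M, EucShrinkEqnAt m F p

/-- `μ` is the Riemannian volume measure of the metric induced by `F`: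
in every chart it is given by `√(det g) dx`. -/
def IsRiemannVolume (m : ℕ) {N : ℕ} {M : Type*} [TopologicalSpace M]
    [ChartedSpace (Euc m) M] [MeasurableSpace M] (F : M → Euc N) (μ : Measure M) : Prop :=
  ∀ p : M, ∀ A : Set M, MeasurableSet A → A ⊆ (extChartAt (𝓡 m) p).source →
    μ A = ∫⁻ x in (extChartAt (𝓡 m) p) '' A,
      ENNReal.ofReal (Real.sqrt ((gram (chmap m F p) x).det))

/-- The weighted measure `e^{-f} dvol`. -/
def wMeasure {M : Type*} [MeasurableSpace M] (μ : Measure M) (fM : M → ℝ) : Measure M :=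
  μ.withDensity fun p => ENNReal.ofReal (Real.exp (-(fM p)))

/-! ### The splitting `ℝ^{a+b} = ℝ^a × ℝ^b` and the round cylinder `ℝ^a × S^{b-1}_R` -/

/-- `⟨x-part of z, v⟩` for `v ∈ ℝ^a`. -/
def xdot (a b : ℕ) (z : Euc (a + b)) (v : Euc a) : ℝ :=
  ∑ i : Fin a, z (Fin.castAdd b i) * v i

/-- `⟨x-part of z, x-part of v⟩`. -/
def xpairing (a b : ℕ) (z v : Euc (a + b)) : ℝ :=
  ∑ i : Fin a, z (Fin.castAdd b i) * v (Fin.castAdd b i)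

/-- `|x-part of z|²`. -/
def xnormSq (a b : ℕ) (z : Euc (a + b)) : ℝ :=
  ∑ i : Fin a, (z (Fin.castAdd b i)) ^ 2

/-- `⟨y-part of z, y-part of w⟩`. -/
def yinner (a b : ℕ) (z w : Euc (a + b)) : ℝ :=
  ∑ j : Fin b, z (Fin.natAdd a j) * w (Fin.natAdd a j)

/-- `|y-part of z|²`. -/
def ynormSq (a b : ℕ) (z : Euc (a + b)) : ℝ :=
  ∑ j : Fin b, (z (Fin.natAdd a j)) ^ 2

/-- The `ℝ^a`-component of `z ∈ ℝ^{a+b}`. -/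
def xpartVec (a b : ℕ) (z : Euc (a + b)) : Euc a :=
  WithLp.toLp 2 (fun i => z (Fin.castAdd b i))

/-- `(x, 0) ∈ ℝ^{a+b}` where `x` is the `ℝ^a`-component of `z`. -/
def xembed (a b : ℕ) (z : Euc (a + b)) : Euc (a + b) :=
  WithLp.toLp 2 ((fun i => Fin.addCases (fun i₁ => z (Fin.castAdd b i₁)) (fun _ => 0) i) : Fin (a + b) → ℝ)

/-- `(0, y) ∈ ℝ^{a+b}` where `y` is the `ℝ^b`-component of `z`. -/
def yembed (a b : ℕ) (z : Euc (a + b)) : Euc (a + b) :=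
  WithLp.toLp 2 ((fun i => Fin.addCases (fun _ => 0) (fun j => z (Fin.natAdd a j)) i) : Fin (a + b) → ℝ)

/-- The round cylinder `ℝ^a × S^{b-1}_R ⊆ ℝ^{a+b}`. -/
def cylSet (a b : ℕ) (R : ℝ) : Set (Euc (a + b)) := {z | ynormSq a b z = R ^ 2}

/-- Orthogonal projection of an ambient vector `v` onto the tangent space of the
cylinder at the point `z` (i.e. removing the radial component of the sphere factor). -/
def projCylT (a b : ℕ) (z v : Euc (a + b)) : Euc (a + b) :=
  v - (yinner a b v z / ynormSq a b z) • yembed a b z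

/-- `∑_{i<j} x_i²` (sum of squares of the first `j` of the `ℝ^a`-coordinates). -/
def sumXSq (a b : ℕ) (j : ℕ) (z : Euc (a + b)) : ℝ :=
  ∑ i : Fin a, if (i : ℕ) < j then (z (Fin.castAdd b i)) ^ 2 else 0

/-- The `f`-minimal (self-shrinker) equation in the cylinder `ℝ^a × S^{b-1}_R` with
`f(x,y) = |x|²/4`:  `H⃗ + ((∇̄f)^{⊥_M}) = 0`, where `H⃗` is the mean curvature vector of
`M` inside the cylinder (the projection onto the tangent space of the cylinder of the full
Euclidean mean curvature vector) and `(∇̄f)^{⊥_M}` is the component of `∇̄f = (x/2, 0)`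
orthogonal to `T_pM`. -/
def CylShrinkEqnAt (a b m : ℕ) {M : Type*} [TopologicalSpace M]
    [ChartedSpace (Euc m) M] (F : M → Euc (a + b)) (p : M) : Prop :=
  projCylT a b (F p) (mcv m F p) + nprojAt m F p ((2⁻¹ : ℝ) • xembed a b (F p)) = 0

/-- A self-shrinker (`f`-minimal) submanifold immersed in the gradient shrinking Ricci
soliton `ℝ^a × S^{b-1}_R` (with `f(x,y) = |x|²/4`). -/
def IsCylSelfShrinker (a b m : ℕ) (R : ℝ) {M : Type*} [TopologicalSpace M]
    [ChartedSpace (Euc m) M] (F : M → Euc (a + b)) : Prop :=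
  IsSmoothImmersion m F ∧ (∀ p : M, F p ∈ cylSet a b R) ∧ ∀ p : M, CylShrinkEqnAt a b m F p

/-- `tr_M g_{S^{b-1}}` : the trace over the tangent space of `M` of the pullback of the
metric of the spherical factor. -/
def sphTrace (a b m : ℕ) {M : Type*} [TopologicalSpace M]
    [ChartedSpace (Euc m) M] (F : M → Euc (a + b)) (p : M) : ℝ :=
  ∑ i, ∑ j, ginv (chmap m F p) (chpt m p) i j *
    yinner a b (pder (chmap m F p) i (chpt m p)) (pder (chmap m F p) j (chpt m p))

/-! ### An abstract ambient manifold realized isometrically in Euclidean space -/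

/-- Intrinsic gradient of `f : B → ℝ` on the (ambient) manifold `B` isometrically
immersed in `ℝ^N` by `G`, viewed as a vector of `ℝ^N` tangent to `B`. -/
def ambGrad (d : ℕ) {N : ℕ} {B : Type*} [TopologicalSpace B] [ChartedSpace (Euc d) B]
    (G : B → Euc N) (f : B → ℝ) (q : B) : Euc N :=
  ∑ i, ∑ j, (ginv (chmap d G q) (chpt d q) i j * spder (pull d f q) j (chpt d q)) •
    pder (chmap d G q) i (chpt d q)

/-- Hessian `∇∇f` of the manifold `(B, G)` in the canonical chart at `q`. -/
def ambHessMat (d : ℕ) {N : ℕ} {B : Type*} [TopologicalSpace B] [ChartedSpace (Euc d) B]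
    (G : B → Euc N) (f : B → ℝ) (q : B) (i j : Fin d) : ℝ :=
  hessCoord (chmap d G q) (pull d f q) (chpt d q) i j

/-- Hessian `∇∇f(u,v)` evaluated on ambient vectors `u, v` tangent to `B` at `q`. -/
def ambHess (d : ℕ) {N : ℕ} {B : Type*} [TopologicalSpace B] [ChartedSpace (Euc d) B]
    (G : B → Euc N) (f : B → ℝ) (q : B) (u v : Euc N) : ℝ :=
  ∑ i, ∑ j, ambHessMat d G f q i j *
    coordsOf (chmap d G q) (chpt d q) u i * coordsOf (chmap d G q) (chpt d q) v j

/-- Ricci curvature of `(B, G)` in the canonical chart at `q`. -/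
def ricAt (d : ℕ) {N : ℕ} {B : Type*} [TopologicalSpace B] [ChartedSpace (Euc d) B]
    (G : B → Euc N) (q : B) (i j : Fin d) : ℝ :=
  ricCoord (chmap d G q) (chpt d q) i j

/-- Scalar curvature of `(B, G)` at `q`. -/
def scalAt (d : ℕ) {N : ℕ} {B : Type*} [TopologicalSpace B] [ChartedSpace (Euc d) B]
    (G : B → Euc N) (q : B) : ℝ :=
  scalCoord (chmap d G q) (chpt d q)

/-- `(B, g, f)` (with `g` the metric induced by the isometric immersion `G` — by the Nash
embedding theorem this entails no loss of generality) is a gradient shrinking Ricci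
soliton: `Ric + ∇∇f = c g` with `c > 0`. -/
def IsGradShrinkSoliton (d : ℕ) {N : ℕ} {B : Type*} [TopologicalSpace B]
    [ChartedSpace (Euc d) B] (G : B → Euc N) (f : B → ℝ) (c : ℝ) : Prop :=
  IsSmoothImmersion d G ∧ ContMDiff (𝓡 d) 𝓘(ℝ, ℝ) (⊤ : ℕ∞) f ∧ 0 < c ∧
    ∀ q : B, ∀ i j : Fin d,
      ricAt d G q i j + ambHessMat d G f q i j = c * gram (chmap d G q) (chpt d q) i j

/-- `ι : M → B` is a smooth immersion which is `f`-minimal: `H⃗ + (∇̄f)^⊥ = 0`, where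
`H⃗` is the mean curvature vector of `M` in `B` (the projection onto `T B` of the full
Euclidean mean curvature vector of `G ∘ ι`) and `⊥` is the projection onto the normal
bundle of `M` in `B`. -/
def IsFMinimalIn (d m : ℕ) {N : ℕ} {B : Type*} [TopologicalSpace B]
    [ChartedSpace (Euc d) B] {M : Type*} [TopologicalSpace M] [ChartedSpace (Euc m) M]
    (G : B → Euc N) (f : B → ℝ) (ι : M → B) : Prop :=
  ContMDiff (𝓡 m) (𝓡 d) (⊤ : ℕ∞) ι ∧ IsSmoothImmersion m (G ∘ ι) ∧
    ∀ p : M,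
      ((Submodule.orthogonalProjection (tangentAt d G (ι p)) (mcv m (G ∘ ι) p) : Euc N)) +
        nprojAt m (G ∘ ι) p (ambGrad d G f (ι p)) = 0

end ShrinkerPaper

namespace ShrinkerProof
open ShrinkerPaper

variable {m N : ℕ}

lemma euc_sum_apply {α} (s : Finset α) (f : α → Euc N) (a : Fin N) :
    (∑ x ∈ s, f x) a = ∑ x ∈ s, f x a := by
  rw [WithLp.ofLp_sum, Finset.sum_apply]

lemma euc_smul_apply (c : ℝ) (u : Euc N) (a : Fin N) : (c • u) a = c * u a := rfl

lemma euc_sub_apply (u v : Euc N) (a : Fin N) : (u - v) a = u a - v a := rfl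

lemma euc_add_apply (u v : Euc N) (a : Fin N) : (u + v) a = u a + v a := rfl

lemma real_inner_euc (u v : Euc N) : ⟪u, v⟫ = ∑ i, u i * v i := by
  simp [PiLp.inner_apply, RCLike.inner_apply, mul_comm]

lemma euc_decomp (x : Euc m) : x = ∑ i, x i • ebasis m i := by
  ext a
  rw [euc_sum_apply]
  simp [ebasis, EuclideanSpace.single_apply]

lemma clm_apply_eq_sum (L : Euc m →L[ℝ] Euc N) (x : Euc m) :
    L x = ∑ i, x i • L (ebasis m i) := by
  conv_lhs => rw [euc_decomp x]
  rw [map_sum]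
  simp

lemma gram_symm (φ : Euc m → Euc N) (x : Euc m) (i j : Fin m) :
    gram φ x i j = gram φ x j i :=
  show ⟪pder φ i x, pder φ j x⟫ = ⟪pder φ j x, pder φ i x⟫ from real_inner_comm _ _

lemma ginv_symm (φ : Euc m → Euc N) (x : Euc m) (i j : Fin m) :
    ginv φ x i j = ginv φ x j i := by
  have hs : (gram φ x).IsSymm := by
    rw [Matrix.IsSymm]; ext i j; rw [Matrix.transpose_apply, gram_symm]
  have : (ginv φ x).IsSymm := by
    rw [ginv, Matrix.IsSymm, Matrix.transpose_nonsing_inv, hs.eq]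
  conv_lhs => rw [← this.eq]
  rfl

lemma gram_isUnit {φ : Euc m → Euc N} {x₀ : Euc m}
    (hinj : Function.Injective (fderiv ℝ φ x₀)) : IsUnit (gram φ x₀).det := by
  rw [isUnit_iff_ne_zero]
  intro hdet
  obtain ⟨c, hc, hGc⟩ := (Matrix.exists_mulVec_eq_zero_iff).2 hdet
  apply hc
  have hu2 : fderiv ℝ φ x₀ (WithLp.toLp 2 (fun i => c i) : Euc m) = ∑ i, c i • pder φ i x₀ := by
    rw [clm_apply_eq_sum]; rfl
  have hinner : ⟪(∑ i, c i • pder φ i x₀ : Euc N), ∑ i, c i • pder φ i x₀⟫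
      = ∑ i, c i * (gram φ x₀).mulVec c i := by
    rw [sum_inner]
    refine Finset.sum_congr rfl fun i _ => ?_
    rw [real_inner_smul_left, inner_sum]
    congr 1
    simp only [real_inner_smul_right, Matrix.mulVec, dotProduct]
    refine Finset.sum_congr rfl fun j _ => ?_
    rw [mul_comm]
    rfl
  rw [hGc] at hinner
  simp only [Pi.zero_apply, mul_zero, Finset.sum_const_zero] at hinner
  have hu0 : (∑ i, c i • pder φ i x₀ : Euc N) = 0 := by rwa [inner_self_eq_zero] at hinner
  have : (WithLp.toLp 2 (fun i => c i) : Euc m) = 0 := by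
    apply hinj
    rw [hu2, hu0, map_zero]
  funext i
  exact congrArg (fun v : Euc m => v i) this

lemma pder_mem_tan (φ : Euc m → Euc N) (x : Euc m) (i : Fin m) :
    pder φ i x ∈ tanSpace φ x := LinearMap.mem_range.2 ⟨ebasis m i, rfl⟩

lemma inv_contract {φ : Euc m → Euc N} {x₀ : Euc m} (hdet : IsUnit (gram φ x₀).det)
    (b : Fin m → ℝ) (s : Fin m) :
    ∑ l, (∑ r, ginv φ x₀ l r * b r) * gram φ x₀ l s = b s := by
  have key : (gram φ x₀ * ginv φ x₀) s = (1 : Matrix (Fin m) (Fin m) ℝ) s := by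
    rw [ginv, Matrix.mul_nonsing_inv _ hdet]
  calc ∑ l, (∑ r, ginv φ x₀ l r * b r) * gram φ x₀ l s
      = ∑ l, ∑ r, ginv φ x₀ l r * b r * gram φ x₀ l s :=
        Finset.sum_congr rfl fun l _ => Finset.sum_mul _ _ _
    _ = ∑ r, ∑ l, ginv φ x₀ l r * b r * gram φ x₀ l s := Finset.sum_comm
    _ = ∑ r, (∑ l, gram φ x₀ s l * ginv φ x₀ l r) * b r := by
        refine Finset.sum_congr rfl fun r _ => ?_
        rw [Finset.sum_mul]
        refine Finset.sum_congr rfl fun l _ => ?_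
        rw [gram_symm _ _ l s]
        ring
    _ = ∑ r, (1 : Matrix (Fin m) (Fin m) ℝ) s r * b r := by
        refine Finset.sum_congr rfl fun r _ => ?_
        rw [← Matrix.mul_apply, key]
    _ = b s := by simp [Matrix.one_apply]

lemma tproj_eq {φ : Euc m → Euc N} {x₀ : Euc m} (hdet : IsUnit (gram φ x₀).det)
    (v : Euc N) :
    tproj φ x₀ v = ∑ l, (∑ r, ginv φ x₀ l r * ⟪v, pder φ r x₀⟫) • pder φ l x₀ := by
  show (tanSpace φ x₀).starProjection v = _
  apply Submodule.eq_starProjection_of_mem_of_inner_eq_zero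
  · exact Submodule.sum_mem _ fun l _ => Submodule.smul_mem _ _ (pder_mem_tan φ x₀ l)
  · rintro w ⟨cv, rfl⟩
    have hw : (fderiv ℝ φ x₀ : Euc m →ₗ[ℝ] Euc N) cv = ∑ s, cv s • pder φ s x₀ := clm_apply_eq_sum _ _
    rw [hw, inner_sub_left, inner_sum, inner_sum, sub_eq_zero]
    refine Finset.sum_congr rfl fun s _ => ?_
    rw [real_inner_smul_right, real_inner_smul_right]
    congr 1
    rw [sum_inner]
    refine Eq.symm ?_
    calc ∑ l, ⟪(∑ r, ginv φ x₀ l r * ⟪v, pder φ r x₀⟫) • pder φ l x₀, pder φ s x₀⟫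
        = ∑ l, (∑ r, ginv φ x₀ l r * ⟪v, pder φ r x₀⟫) * gram φ x₀ l s := by
          refine Finset.sum_congr rfl fun l _ => ?_
          rw [real_inner_smul_left]
          rfl
      _ = ⟪v, pder φ s x₀⟫ := inv_contract hdet _ s




open ShrinkerPaper Set

variable {m N : ℕ} {M : Type*} [TopologicalSpace M] [ChartedSpace (Euc m) M]

lemma chmap_at (F : M → Euc N) (q : M) : chmap m F q (chpt m q) = F q := by
  simp only [chmap, chpt, Function.comp_apply]
  rw [PartialEquiv.left_inv _ (mem_extChartAt_source (I := 𝓡 m) q)]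

lemma chart_contDiffAt {F : M → Euc N}
    (h : ContMDiff (𝓡 m) 𝓘(ℝ, Euc N) (⊤ : ℕ∞) F) (q : M) :
    ContDiffAt ℝ 2 (chmap m F q) (chpt m q) := by
  have h1 := (contMDiffAt_iff.1 (h q)).2
  rw [extChartAt_model_space_eq_id] at h1
  simp only [PartialEquiv.refl_coe, Function.comp_def, id] at h1
  have h2 : range (𝓡 m : ModelWithCorners ℝ (Euc m) (Euc m)) = univ := by simp
  rw [h2, contDiffWithinAt_univ] at h1
  exact h1.of_le (by
    rw [show ((2 : WithTop ℕ∞)) = ((2 : ℕ∞) : WithTop ℕ∞) from rfl, WithTop.coe_le_coe]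
    exact le_top)

lemma mfderiv_eq_chart {F : M → Euc N}
    (h : ContMDiff (𝓡 m) 𝓘(ℝ, Euc N) (⊤ : ℕ∞) F) (q : M) :
    mfderiv (𝓡 m) 𝓘(ℝ, Euc N) F q = fderiv ℝ (chmap m F q) (chpt m q) := by
  have hd : MDifferentiableAt (𝓡 m) 𝓘(ℝ, Euc N) F q := (h q).mdifferentiableAt (by simp)
  rw [hd.mfderiv]
  have h2 : range (𝓡 m : ModelWithCorners ℝ (Euc m) (Euc m)) = univ := by simp
  rw [h2, fderivWithin_univ]
  rfl

lemma chart_fderiv_inj {F : M → Euc N}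
    (himm : IsSmoothImmersion m F) (q : M) :
    Function.Injective (fderiv ℝ (chmap m F q) (chpt m q)) := by
  have := himm.2 q
  rwa [mfderiv_eq_chart himm.1 q] at this



open ShrinkerPaper Set

set_option maxHeartbeats 2000000 in
lemma master {p k m : ℕ} (φ : Euc m → Euc (p + (k + 1))) (x₀ : Euc m)
    (hsm : ContDiffAt ℝ 2 φ x₀) (hinj : Function.Injective (fderiv ℝ φ x₀))
    (hconst : ∀ x, ∑ a : Fin (k + 1), φ x (Fin.natAdd p a) * φ x (Fin.natAdd p a)
        = 2 * ((k : ℝ) - 1)) :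
    (∀ a : Fin (p + (k + 1)),
        lapCoord φ (fun y => φ y a) x₀
          - gradInnerCoord φ
              (fun y => 4⁻¹ * ∑ b : Fin p,
                φ y (Fin.castAdd (k + 1) b) * φ y (Fin.castAdd (k + 1) b))
              (fun y => φ y a) x₀
          = meanCurvCoord φ x₀ a
            - tproj φ x₀ ((2⁻¹ : ℝ) • xembed p (k + 1) (φ x₀)) a)
    ∧ yinner p (k + 1) (meanCurvCoord φ x₀) (φ x₀)
        = - ∑ i, ∑ j, ginv φ x₀ i j * yinner p (k + 1) (pder φ i x₀) (pder φ j x₀) := by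
  have hdiff : DifferentiableAt ℝ φ x₀ := hsm.differentiableAt two_ne_zero
  have hev : ∀ᶠ x in nhds x₀, DifferentiableAt ℝ φ x :=
    (hsm.eventually (by norm_num)).mono fun x hx => hx.differentiableAt two_ne_zero
  have hd1 : DifferentiableAt ℝ (fderiv ℝ φ) x₀ :=
    (hsm.fderiv_right (m := 1) (by norm_num)).differentiableAt one_ne_zero
  have hdet : IsUnit (gram φ x₀).det := gram_isUnit hinj
  -- first derivatives of coordinate functions
  have hS1 : ∀ (a : Fin (p + (k + 1))) (i : Fin m) (x : Euc m), DifferentiableAt ℝ φ x →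
      spder (fun y => φ y a) i x = pder φ i x a := by
    intro a i x hx
    have h : HasFDerivAt (fun y => φ y a)
        ((EuclideanSpace.proj a).comp (fderiv ℝ φ x)) x := by
      exact (EuclideanSpace.proj a).hasFDerivAt.comp x hx.hasFDerivAt
    rw [spder, h.fderiv]
    rfl
  -- second derivatives via the derivative of the derivative
  have hpder2A : ∀ (i j : Fin m), pder2 φ i j x₀
      = fderiv ℝ (fderiv ℝ φ) x₀ (ebasis m j) (ebasis m i) := by
    intro i j
    have h : HasFDerivAt (fun y => fderiv ℝ φ y (ebasis m i))
        ((ContinuousLinearMap.apply ℝ (Euc (p + (k + 1))) (ebasis m i)).comp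
          (fderiv ℝ (fderiv ℝ φ) x₀)) x₀ := by
      exact (ContinuousLinearMap.apply ℝ (Euc (p + (k + 1))) (ebasis m i)).hasFDerivAt.comp
        x₀ hd1.hasFDerivAt
    rw [pder2, show (fun y => pder φ i y) = (fun y => fderiv ℝ φ y (ebasis m i)) from rfl,
      h.fderiv]
    rfl
  have hS2 : ∀ (a : Fin (p + (k + 1))) (i j : Fin m),
      spder2 (fun y => φ y a) i j x₀ = pder2 φ i j x₀ a := by
    intro a i j
    have hfe : (fun y => spder (fun y' => φ y' a) i y)
        =ᶠ[nhds x₀] fun y => fderiv ℝ φ y (ebasis m i) a :=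
      hev.mono fun x hx => hS1 a i x hx
    have h : HasFDerivAt (fun y => fderiv ℝ φ y (ebasis m i) a)
        (((EuclideanSpace.proj a).comp
            (ContinuousLinearMap.apply ℝ (Euc (p + (k + 1))) (ebasis m i))).comp
          (fderiv ℝ (fderiv ℝ φ) x₀)) x₀ := by
      exact ((EuclideanSpace.proj a).comp
          (ContinuousLinearMap.apply ℝ (Euc (p + (k + 1))) (ebasis m i))).hasFDerivAt.comp
        x₀ hd1.hasFDerivAt
    rw [spder2, hfe.fderiv_eq, h.fderiv, hpder2A]
    rfl
  -- F1 : spherical constraint, first derivative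
  have hF1 : ∀ (i : Fin m) (x : Euc m),
      ∑ a : Fin (k + 1), φ x (Fin.natAdd p a) * pder φ i x (Fin.natAdd p a) = 0 := by
    intro i x
    by_cases hx : DifferentiableAt ℝ φ x
    · have hC : HasFDerivAt
          (fun y => ∑ a : Fin (k + 1), φ y (Fin.natAdd p a) * φ y (Fin.natAdd p a))
          (∑ a : Fin (k + 1),
            (φ x (Fin.natAdd p a) •
                ((EuclideanSpace.proj (Fin.natAdd p a)).comp (fderiv ℝ φ x))
              + φ x (Fin.natAdd p a) •
                ((EuclideanSpace.proj (Fin.natAdd p a)).comp (fderiv ℝ φ x)))) x := by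
        apply HasFDerivAt.fun_sum
        intro a _
        have hc : HasFDerivAt (fun y => φ y (Fin.natAdd p a))
            ((EuclideanSpace.proj (Fin.natAdd p a)).comp (fderiv ℝ φ x)) x := by
          exact (EuclideanSpace.proj (Fin.natAdd p a)).hasFDerivAt.comp x hx.hasFDerivAt
        exact hc.mul hc
      have h0 : (∑ a : Fin (k + 1),
            (φ x (Fin.natAdd p a) •
                ((EuclideanSpace.proj (Fin.natAdd p a)).comp (fderiv ℝ φ x))
              + φ x (Fin.natAdd p a) •
                ((EuclideanSpace.proj (Fin.natAdd p a)).comp (fderiv ℝ φ x))))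
          = (0 : Euc m →L[ℝ] ℝ) := by
        rw [← hC.fderiv,
          show (fun y => ∑ a : Fin (k + 1), φ y (Fin.natAdd p a) * φ y (Fin.natAdd p a))
            = fun _ => 2 * ((k : ℝ) - 1) from funext hconst]
        exact fderiv_const_apply _
      have h1 := DFunLike.congr_fun h0 (ebasis m i)
      simp only [ContinuousLinearMap.sum_apply, ContinuousLinearMap.add_apply,
        ContinuousLinearMap.smul_apply, ContinuousLinearMap.coe_comp', Function.comp_apply,
        PiLp.proj_apply, ContinuousLinearMap.zero_apply, smul_eq_mul] at h1
      have h2 : (2 : ℝ) * ∑ a : Fin (k + 1),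
          φ x (Fin.natAdd p a) * pder φ i x (Fin.natAdd p a) = 0 := by
        rw [Finset.mul_sum, ← h1]
        refine Finset.sum_congr rfl fun a _ => ?_
        rw [pder]
        ring
      linarith
    · have h0 : fderiv ℝ φ x = 0 := fderiv_zero_of_not_differentiableAt hx
      simp [pder, h0]
  -- F2 : spherical constraint, second derivative
  have hF2 : ∀ i j : Fin m,
      ∑ a : Fin (k + 1), φ x₀ (Fin.natAdd p a) * pder2 φ i j x₀ (Fin.natAdd p a)
        = - ∑ a : Fin (k + 1),
            pder φ i x₀ (Fin.natAdd p a) * pder φ j x₀ (Fin.natAdd p a) := by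
    intro i j
    have hHD : HasFDerivAt
        (fun y => ∑ a : Fin (k + 1),
          φ y (Fin.natAdd p a) * fderiv ℝ φ y (ebasis m i) (Fin.natAdd p a))
        (∑ a : Fin (k + 1),
          (φ x₀ (Fin.natAdd p a) •
              (((EuclideanSpace.proj (Fin.natAdd p a)).comp
                  (ContinuousLinearMap.apply ℝ (Euc (p + (k + 1))) (ebasis m i))).comp
                (fderiv ℝ (fderiv ℝ φ) x₀))
            + (fderiv ℝ φ x₀ (ebasis m i) (Fin.natAdd p a)) •
              ((EuclideanSpace.proj (Fin.natAdd p a)).comp (fderiv ℝ φ x₀)))) x₀ := by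
      apply HasFDerivAt.fun_sum
      intro a _
      exact ((EuclideanSpace.proj _).hasFDerivAt.comp x₀ hdiff.hasFDerivAt).mul
        (((EuclideanSpace.proj (Fin.natAdd p a)).comp
            (ContinuousLinearMap.apply ℝ (Euc (p + (k + 1))) (ebasis m i))).hasFDerivAt.comp
          x₀ hd1.hasFDerivAt)
    have hD0 : (∑ a : Fin (k + 1),
          (φ x₀ (Fin.natAdd p a) •
              (((EuclideanSpace.proj (Fin.natAdd p a)).comp
                  (ContinuousLinearMap.apply ℝ (Euc (p + (k + 1))) (ebasis m i))).comp
                (fderiv ℝ (fderiv ℝ φ) x₀))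
            + (fderiv ℝ φ x₀ (ebasis m i) (Fin.natAdd p a)) •
              ((EuclideanSpace.proj (Fin.natAdd p a)).comp (fderiv ℝ φ x₀))))
        = (0 : Euc m →L[ℝ] ℝ) := by
      rw [← hHD.fderiv,
        show (fun y => ∑ a : Fin (k + 1),
            φ y (Fin.natAdd p a) * fderiv ℝ φ y (ebasis m i) (Fin.natAdd p a))
          = fun _ => (0 : ℝ) from funext (hF1 i)]
      exact fderiv_const_apply _
    have h1 := DFunLike.congr_fun hD0 (ebasis m j)
    simp only [ContinuousLinearMap.sum_apply, ContinuousLinearMap.add_apply,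
      ContinuousLinearMap.smul_apply, ContinuousLinearMap.coe_comp', Function.comp_apply,
      ContinuousLinearMap.apply_apply, PiLp.proj_apply,
      ContinuousLinearMap.zero_apply, smul_eq_mul] at h1
    rw [Finset.sum_add_distrib] at h1
    have e1 : ∑ a : Fin (k + 1),
        φ x₀ (Fin.natAdd p a) * fderiv ℝ (fderiv ℝ φ) x₀ (ebasis m j) (ebasis m i)
          (Fin.natAdd p a)
        = ∑ a : Fin (k + 1), φ x₀ (Fin.natAdd p a) * pder2 φ i j x₀ (Fin.natAdd p a) := by
      refine Finset.sum_congr rfl fun a _ => ?_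
      rw [hpder2A i j]
    have e2 : ∑ a : Fin (k + 1),
        fderiv ℝ φ x₀ (ebasis m i) (Fin.natAdd p a) * fderiv ℝ φ x₀ (ebasis m j)
          (Fin.natAdd p a)
        = ∑ a : Fin (k + 1),
            pder φ i x₀ (Fin.natAdd p a) * pder φ j x₀ (Fin.natAdd p a) := rfl
    rw [e1, e2] at h1
    linarith
  -- tangential vectors are orthogonal to the sphere factor position vector
  have htanz : ∀ u : Euc (p + (k + 1)),
      ∑ a : Fin (k + 1), tproj φ x₀ u (Fin.natAdd p a) * φ x₀ (Fin.natAdd p a) = 0 := by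
    intro u
    rw [tproj_eq hdet]
    have step1 : ∀ a : Fin (k + 1),
        (∑ l, (∑ r, ginv φ x₀ l r * ⟪u, pder φ r x₀⟫) • pder φ l x₀) (Fin.natAdd p a)
          * φ x₀ (Fin.natAdd p a)
        = ∑ l, (∑ r, ginv φ x₀ l r * ⟪u, pder φ r x₀⟫) *
            (φ x₀ (Fin.natAdd p a) * pder φ l x₀ (Fin.natAdd p a)) := by
      intro a
      rw [euc_sum_apply, Finset.sum_mul]
      refine Finset.sum_congr rfl fun l _ => ?_
      rw [euc_smul_apply]
      ring
    calc ∑ a : Fin (k + 1),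
          (∑ l, (∑ r, ginv φ x₀ l r * ⟪u, pder φ r x₀⟫) • pder φ l x₀) (Fin.natAdd p a)
            * φ x₀ (Fin.natAdd p a)
        = ∑ a : Fin (k + 1), ∑ l, (∑ r, ginv φ x₀ l r * ⟪u, pder φ r x₀⟫) *
            (φ x₀ (Fin.natAdd p a) * pder φ l x₀ (Fin.natAdd p a)) :=
          Finset.sum_congr rfl fun a _ => step1 a
      _ = ∑ l, (∑ r, ginv φ x₀ l r * ⟪u, pder φ r x₀⟫) *
            ∑ a : Fin (k + 1), φ x₀ (Fin.natAdd p a) * pder φ l x₀ (Fin.natAdd p a) := by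
          rw [Finset.sum_comm]
          exact Finset.sum_congr rfl fun l _ => (Finset.mul_sum _ _ _).symm
      _ = 0 := by
          refine Finset.sum_eq_zero fun l _ => ?_
          rw [hF1 l x₀, mul_zero]
  constructor
  · -- part (1)
    intro a
    -- Laplacian of the coordinate function
    have hLap : lapCoord φ (fun y => φ y a) x₀ = meanCurvCoord φ x₀ a := by
      rw [lapCoord, meanCurvCoord, euc_sum_apply]
      refine Finset.sum_congr rfl fun i _ => ?_
      rw [euc_sum_apply]
      refine Finset.sum_congr rfl fun j _ => ?_
      rw [euc_smul_apply, hS2 a i j]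
      have hchr : ∑ l, christoffel φ x₀ l i j * spder (fun y => φ y a) l x₀
          = tproj φ x₀ (pder2 φ i j x₀) a := by
        rw [tproj_eq hdet, euc_sum_apply]
        refine Finset.sum_congr rfl fun l _ => ?_
        rw [euc_smul_apply, hS1 a l x₀ hdiff, christoffel]
      rw [hchr, sff, nproj, euc_sub_apply]
    -- the gradient pairing term
    have hSV : ∀ i : Fin m,
        spder (fun y => 4⁻¹ * ∑ b : Fin p,
          φ y (Fin.castAdd (k + 1) b) * φ y (Fin.castAdd (k + 1) b)) i x₀
        = ⟪(2⁻¹ : ℝ) • xembed p (k + 1) (φ x₀), pder φ i x₀⟫ := by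
      intro i
      have hW : HasFDerivAt
          (fun y => 4⁻¹ * ∑ b : Fin p,
            φ y (Fin.castAdd (k + 1) b) * φ y (Fin.castAdd (k + 1) b))
          ((4 : ℝ)⁻¹ • ∑ b : Fin p,
            (φ x₀ (Fin.castAdd (k + 1) b) •
                ((EuclideanSpace.proj (Fin.castAdd (k + 1) b)).comp (fderiv ℝ φ x₀))
              + φ x₀ (Fin.castAdd (k + 1) b) •
                ((EuclideanSpace.proj (Fin.castAdd (k + 1) b)).comp (fderiv ℝ φ x₀)))) x₀ := by
        apply HasFDerivAt.const_mul
        apply HasFDerivAt.fun_sum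
        intro b _
        have hc : HasFDerivAt (fun y => φ y (Fin.castAdd (k + 1) b))
            ((EuclideanSpace.proj (Fin.castAdd (k + 1) b)).comp (fderiv ℝ φ x₀)) x₀ := by
          exact (EuclideanSpace.proj (Fin.castAdd (k + 1) b)).hasFDerivAt.comp x₀ hdiff.hasFDerivAt
        exact hc.mul hc
      rw [spder, hW.fderiv]
      have hrhs : ⟪(2⁻¹ : ℝ) • xembed p (k + 1) (φ x₀), pder φ i x₀⟫
          = 2⁻¹ * ∑ b : Fin p, φ x₀ (Fin.castAdd (k + 1) b) *
              pder φ i x₀ (Fin.castAdd (k + 1) b) := by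
        rw [real_inner_euc, Fin.sum_univ_add]
        have hy0 : ∀ b : Fin (k + 1),
            ((2⁻¹ : ℝ) • xembed p (k + 1) (φ x₀)) (Fin.natAdd p b) *
              pder φ i x₀ (Fin.natAdd p b) = 0 := by
          intro b
          simp only [euc_smul_apply, xembed, WithLp.ofLp_toLp, Fin.addCases_right]
          ring
        rw [Finset.sum_congr rfl fun b _ => hy0 b, Finset.sum_const_zero, add_zero,
          Finset.mul_sum]
        refine Finset.sum_congr rfl fun b _ => ?_
        simp only [euc_smul_apply, xembed, WithLp.ofLp_toLp, Fin.addCases_left]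
        ring
      rw [hrhs]
      simp only [ContinuousLinearMap.smul_apply, ContinuousLinearMap.sum_apply,
        ContinuousLinearMap.add_apply, ContinuousLinearMap.coe_comp', Function.comp_apply,
        PiLp.proj_apply, smul_eq_mul]
      rw [Finset.mul_sum, Finset.mul_sum]
      refine Finset.sum_congr rfl fun b _ => ?_
      rw [pder]
      ring
    have hGrad : gradInnerCoord φ
        (fun y => 4⁻¹ * ∑ b : Fin p,
          φ y (Fin.castAdd (k + 1) b) * φ y (Fin.castAdd (k + 1) b))
        (fun y => φ y a) x₀
        = tproj φ x₀ ((2⁻¹ : ℝ) • xembed p (k + 1) (φ x₀)) a := by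
      rw [gradInnerCoord, tproj_eq hdet, euc_sum_apply]
      have hrhs : ∀ l, ((∑ r, ginv φ x₀ l r *
            ⟪(2⁻¹ : ℝ) • xembed p (k + 1) (φ x₀), pder φ r x₀⟫) • pder φ l x₀) a
          = ∑ r, ginv φ x₀ l r *
              ⟪(2⁻¹ : ℝ) • xembed p (k + 1) (φ x₀), pder φ r x₀⟫ * pder φ l x₀ a := by
        intro l
        rw [euc_smul_apply, Finset.sum_mul]
      rw [Finset.sum_congr rfl fun l _ => hrhs l, Finset.sum_comm]
      refine Finset.sum_congr rfl fun i _ => ?_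
      refine Finset.sum_congr rfl fun j _ => ?_
      rw [hSV j, hS1 a i x₀ hdiff, ginv_symm φ x₀ j i]
    rw [hLap, hGrad]
  · -- part (2)
    rw [yinner]
    have hmc : ∀ a : Fin (k + 1), meanCurvCoord φ x₀ (Fin.natAdd p a)
        = ∑ i, ∑ j, ginv φ x₀ i j * sff φ x₀ i j (Fin.natAdd p a) := by
      intro a
      rw [meanCurvCoord, euc_sum_apply]
      refine Finset.sum_congr rfl fun i _ => ?_
      rw [euc_sum_apply]
      refine Finset.sum_congr rfl fun j _ => ?_
      rw [euc_smul_apply]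
    calc ∑ a : Fin (k + 1),
          meanCurvCoord φ x₀ (Fin.natAdd p a) * φ x₀ (Fin.natAdd p a)
        = ∑ a : Fin (k + 1), ∑ i, ∑ j, ginv φ x₀ i j *
            (sff φ x₀ i j (Fin.natAdd p a) * φ x₀ (Fin.natAdd p a)) := by
          refine Finset.sum_congr rfl fun a _ => ?_
          rw [hmc a, Finset.sum_mul]
          refine Finset.sum_congr rfl fun i _ => ?_
          rw [Finset.sum_mul]
          exact Finset.sum_congr rfl fun j _ => by ring
      _ = ∑ i, ∑ j, ginv φ x₀ i j *
            ∑ a : Fin (k + 1), sff φ x₀ i j (Fin.natAdd p a) * φ x₀ (Fin.natAdd p a) := by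
          rw [Finset.sum_comm]
          refine Finset.sum_congr rfl fun i _ => ?_
          rw [Finset.sum_comm]
          exact Finset.sum_congr rfl fun j _ => (Finset.mul_sum _ _ _).symm
      _ = - ∑ i, ∑ j, ginv φ x₀ i j * yinner p (k + 1) (pder φ i x₀) (pder φ j x₀) := by
          rw [← Finset.sum_neg_distrib]
          refine Finset.sum_congr rfl fun i _ => ?_
          rw [← Finset.sum_neg_distrib]
          refine Finset.sum_congr rfl fun j _ => ?_
          rw [← mul_neg]
          congr 1
          have hsplit : ∑ a : Fin (k + 1),
              sff φ x₀ i j (Fin.natAdd p a) * φ x₀ (Fin.natAdd p a)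
              = (∑ a : Fin (k + 1),
                  φ x₀ (Fin.natAdd p a) * pder2 φ i j x₀ (Fin.natAdd p a))
                - ∑ a : Fin (k + 1),
                  tproj φ x₀ (pder2 φ i j x₀) (Fin.natAdd p a) * φ x₀ (Fin.natAdd p a) := by
            rw [← Finset.sum_sub_distrib]
            refine Finset.sum_congr rfl fun a _ => ?_
            rw [sff, nproj, euc_sub_apply]
            ring
          rw [hsplit, htanz, sub_zero, hF2 i j, yinner]



open ShrinkerPaper Set

variable {p k m : ℕ} {M : Type*} [TopologicalSpace M] [ChartedSpace (Euc m) M]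

lemma perpoint (hk : 2 ≤ k) (F : M → Euc (p + (k + 1))) (himm : IsSmoothImmersion m F)
    (hcyl : ∀ q' : M, F q' ∈ cylSet p (k + 1) (Real.sqrt (2 * ((k : ℝ) - 1))))
    (fM : M → ℝ) (hfM : ∀ q' : M, fM q' = xnormSq p (k + 1) (F q') / 4) (q : M) :
    (∀ a, driftLap m F fM (fun q' => F q' a) q
        = mcv m F q a
          - tproj (chmap m F q) (chpt m q) ((2⁻¹ : ℝ) • xembed p (k + 1) (F q)) a)
    ∧ yinner p (k + 1) (mcv m F q) (F q) = - sphTrace p (k + 1) m F q := by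
  have hkpos : (0 : ℝ) < 2 * ((k : ℝ) - 1) := by
    have h2 : (2 : ℝ) ≤ (k : ℝ) := by exact_mod_cast hk
    nlinarith
  have hconst : ∀ x : Euc m,
      ∑ a : Fin (k + 1), chmap m F q x (Fin.natAdd p a) * chmap m F q x (Fin.natAdd p a)
        = 2 * ((k : ℝ) - 1) := by
    intro x
    have h := hcyl ((extChartAt (𝓡 m) q).symm x)
    rw [cylSet, mem_setOf_eq, ynormSq, Real.sq_sqrt hkpos.le] at h
    rw [← h]
    refine Finset.sum_congr rfl fun a _ => ?_
    rw [pow_two]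
    rfl
  obtain ⟨h1, h2⟩ := master (chmap m F q) (chpt m q) (chart_contDiffAt himm.1 q)
      (chart_fderiv_inj himm q) hconst
  have hz : chmap m F q (chpt m q) = F q := chmap_at F q
  constructor
  · intro a
    have hpull : pull m fM q = fun y => 4⁻¹ * ∑ b : Fin p,
        chmap m F q y (Fin.castAdd (k + 1) b) * chmap m F q y (Fin.castAdd (k + 1) b) := by
      funext y
      have hy : pull m fM q y
          = xnormSq p (k + 1) (F ((extChartAt (𝓡 m) q).symm y)) / 4 := hfM _
      rw [hy, xnormSq, div_eq_inv_mul]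
      congr 1
      refine Finset.sum_congr rfl fun b _ => ?_
      rw [pow_two]
      rfl
    have e1 : driftLap m F fM (fun q' => F q' a) q
        = lapCoord (chmap m F q) (fun y => chmap m F q y a) (chpt m q)
          - gradInnerCoord (chmap m F q) (pull m fM q)
              (fun y => chmap m F q y a) (chpt m q) := rfl
    rw [e1, hpull, ← hz]
    exact h1 a
  · rw [show mcv m F q = meanCurvCoord (chmap m F q) (chpt m q) from rfl, ← hz]
    rw [h2]
    rfl

theorem mainAux
    {p k m : ℕ} (hk : 2 ≤ k) {M : Type*} [TopologicalSpace M]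
    [ChartedSpace (Euc m) M] [IsManifold (𝓡 m) ((⊤ : ℕ∞) : WithTop ℕ∞) M]
    (F : M → Euc (p + (k + 1)))
    (himm : IsSmoothImmersion m F)
    (hcyl : ∀ q : M, F q ∈ cylSet p (k + 1) (Real.sqrt (2 * ((k : ℝ) - 1))))
    (fM : M → ℝ) (hfM : ∀ q : M, fM q = xnormSq p (k + 1) (F q) / 4) :
    (∀ q : M, CylShrinkEqnAt p (k + 1) m F q) ↔
      ((∀ i : Fin p, ∀ q : M,
          driftLap m F fM (fun q' => F q' (Fin.castAdd (k + 1) i)) q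
            = -(2⁻¹ : ℝ) * F q (Fin.castAdd (k + 1) i)) ∧
       (∀ i : Fin (k + 1), ∀ q : M,
          driftLap m F fM (fun q' => F q' (Fin.natAdd p i)) q
            = -((1 / (2 * ((k : ℝ) - 1))) * sphTrace p (k + 1) m F q)
                * F q (Fin.natAdd p i))) := by
  have hkpos : (0 : ℝ) < 2 * ((k : ℝ) - 1) := by
    have h2 : (2 : ℝ) ≤ (k : ℝ) := by exact_mod_cast hk
    nlinarith
  have hS : ∀ q : M, ynormSq p (k + 1) (F q) = 2 * ((k : ℝ) - 1) := by
    intro q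
    have h := hcyl q
    rwa [cylSet, mem_setOf_eq, Real.sq_sqrt hkpos.le] at h
  -- componentwise description of the shrinker equation
  have hcomp : ∀ q : M, ∀ t : Fin (p + (k + 1)),
      (projCylT p (k + 1) (F q) (mcv m F q)
        + nprojAt m F q ((2⁻¹ : ℝ) • xembed p (k + 1) (F q))) t
      = driftLap m F fM (fun q' => F q' t) q
        - (yinner p (k + 1) (mcv m F q) (F q) / ynormSq p (k + 1) (F q))
            * yembed p (k + 1) (F q) t
        + 2⁻¹ * xembed p (k + 1) (F q) t := by
    intro q t
    obtain ⟨h1, _⟩ := perpoint hk F himm hcyl fM hfM q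
    rw [h1 t, euc_add_apply, projCylT, nprojAt, nproj, euc_sub_apply, euc_sub_apply,
      euc_smul_apply, euc_smul_apply]
    ring
  have hxe : ∀ (q : M) (i : Fin p),
      xembed p (k + 1) (F q) (Fin.castAdd (k + 1) i) = F q (Fin.castAdd (k + 1) i) := by
    intro q i; simp [xembed]
  have hxe0 : ∀ (q : M) (i : Fin (k + 1)),
      xembed p (k + 1) (F q) (Fin.natAdd p i) = 0 := by
    intro q i; simp [xembed]
  have hye : ∀ (q : M) (i : Fin (k + 1)),
      yembed p (k + 1) (F q) (Fin.natAdd p i) = F q (Fin.natAdd p i) := by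
    intro q i; simp [yembed]
  have hye0 : ∀ (q : M) (i : Fin p),
      yembed p (k + 1) (F q) (Fin.castAdd (k + 1) i) = 0 := by
    intro q i; simp [yembed]
  constructor
  · intro hshr
    constructor
    · intro i q
      have hE := congrArg (fun v : Euc (p + (k + 1)) => v (Fin.castAdd (k + 1) i)) (hshr q)
      dsimp only at hE
      rw [hcomp q (Fin.castAdd (k + 1) i), hxe q i, hye0 q i] at hE
      have h0 : (0 : Euc (p + (k + 1))) (Fin.castAdd (k + 1) i) = 0 := rfl
      rw [h0] at hE
      linarith [hE]
    · intro i q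
      obtain ⟨_, h2⟩ := perpoint hk F himm hcyl fM hfM q
      have hE := congrArg (fun v : Euc (p + (k + 1)) => v (Fin.natAdd p i)) (hshr q)
      dsimp only at hE
      rw [hcomp q (Fin.natAdd p i), hxe0 q i, hye q i, h2, hS q] at hE
      have h0 : (0 : Euc (p + (k + 1))) (Fin.natAdd p i) = 0 := rfl
      rw [h0] at hE
      have hne : 2 * ((k : ℝ) - 1) ≠ 0 := ne_of_gt hkpos
      field_simp at hE ⊢
      linarith [hE]
  · rintro ⟨hx, hy⟩ q
    rw [CylShrinkEqnAt]
    ext t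
    have h0 : (0 : Euc (p + (k + 1))) t = 0 := rfl
    rw [h0, hcomp q t]
    refine Fin.addCases (fun i => ?_) (fun i => ?_) t
    · rw [hxe q i, hye0 q i, hx i q]
      ring
    · obtain ⟨_, h2⟩ := perpoint hk F himm hcyl fM hfM q
      rw [hxe0 q i, hye q i, hy i q, h2, hS q]
      have hne : 2 * ((k : ℝ) - 1) ≠ 0 := ne_of_gt hkpos
      field_simp
      ring


end ShrinkerProof

open ShrinkerPaper in
/-- A submanifold of the gradient shrinking Ricci soliton
`ℝ^p × S^k_{√(2(k-1))}` (with `f(x,y) = |x|²/4`) is a self-shrinker iff the cartesian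
coordinates `x₁, …, x_p` of `ℝ^p` satisfy `Δ_f x_i = -(1/2) x_i` and the cartesian coordinates
`y₁, …, y_{k+1}` of `ℝ^{k+1}` satisfy `Δ_f y_i = -((1/(2(k-1))) tr_M g_{S^k}) y_i`. -/
theorem cylShrinker_iff_coordinates_eigenfunctions
    {p k m : ℕ} (hk : 2 ≤ k) {M : Type*} [TopologicalSpace M]
    [ChartedSpace (Euc m) M] [IsManifold (𝓡 m) ((⊤ : ℕ∞) : WithTop ℕ∞) M]
    (F : M → Euc (p + (k + 1)))
    (himm : IsSmoothImmersion m F)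
    (hcyl : ∀ q : M, F q ∈ cylSet p (k + 1) (Real.sqrt (2 * ((k : ℝ) - 1))))
    (fM : M → ℝ) (hfM : ∀ q : M, fM q = xnormSq p (k + 1) (F q) / 4) :
    (∀ q : M, CylShrinkEqnAt p (k + 1) m F q) ↔
      ((∀ i : Fin p, ∀ q : M,
          driftLap m F fM (fun q' => F q' (Fin.castAdd (k + 1) i)) q
            = -(2⁻¹ : ℝ) * F q (Fin.castAdd (k + 1) i)) ∧
       (∀ i : Fin (k + 1), ∀ q : M,
          driftLap m F fM (fun q' => F q' (Fin.natAdd p i)) q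
            = -((1 / (2 * ((k : ℝ) - 1))) * sphTrace p (k + 1) m F q)
                * F q (Fin.natAdd p i))) := by
  exact ShrinkerProof.mainAux hk F himm hcyl fM hfM
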